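/- Let a₁, …, a_m be positive real numbers such that the sets {⌊n·aᵢ⌋ : n ≥ 1}, for i = 1, …, m, are pairwise disjoint and their union is the set of positive integers. Then either m = 1 and a₁ = 1, or m = 2 and a₁, a₂ are irrational with 1/a₁ + 1/a₂ = 1. -/

import Mathlib

private lemma usp_dense (θ : ℝ) (hθ : ∀ x : ℤ, 1 ≤ x → Int.fract ((x:ℝ) * θ) ≠ 0)
    (δ : ℝ) (hδ : 0 < δ) : ∃ x : ℤ, 2 ≤ x ∧ 1 - δ < Int.fract ((x:ℝ) * θ) := by
  obtain ⟨N, hN⟩ := exists_nat_gt (max 2 (2/δ))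
  have hN2 : (2:ℝ) < N := lt_of_le_of_lt (le_max_left _ _) hN
  have hNd : 2/δ < N := lt_of_le_of_lt (le_max_right _ _) hN
  have hN0 : (0:ℝ) < N := by linarith
  have hdN : 2 < (N:ℝ) * δ := by rw [div_lt_iff₀ hδ] at hNd; linarith
  have hinv : 1/(N:ℝ) < δ/2 := by
    rw [div_lt_div_iff₀ hN0 (by norm_num : (0:ℝ) < 2)]; linarith
  have hinvhalf : 1/(N:ℝ) < 1/2 := by
    rw [div_lt_div_iff₀ hN0 (by norm_num : (0:ℝ) < 2)]; linarith
  have hmaps : ∀ z ∈ Finset.Icc (1:ℤ) (N+1),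
      (⌊Int.fract ((z:ℝ)*θ) * N⌋) ∈ Finset.Icc (0:ℤ) ((N:ℤ)-1) := by
    intro z _
    have h0 : 0 ≤ Int.fract ((z:ℝ)*θ) := Int.fract_nonneg _
    have h1 : Int.fract ((z:ℝ)*θ) < 1 := Int.fract_lt_one _
    simp only [Finset.mem_Icc]
    refine ⟨by positivity, ?_⟩
    have : ⌊Int.fract ((z:ℝ)*θ) * N⌋ < (N:ℤ) := by
      apply Int.floor_lt.mpr; push_cast; nlinarith
    omega
  have hcard : (Finset.Icc (0:ℤ) ((N:ℤ)-1)).card < (Finset.Icc (1:ℤ) ((N:ℤ)+1)).card := by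
    rw [Int.card_Icc, Int.card_Icc]; omega
  obtain ⟨z1, hz1, z2, hz2, hne, heq⟩ :=
    Finset.exists_ne_map_eq_of_card_lt_of_maps_to hcard hmaps
  simp only [Finset.mem_Icc] at hz1 hz2
  obtain ⟨x, y, hx, hy, hxy, hfeq⟩ : ∃ x y : ℤ, (1 ≤ x ∧ x ≤ N+1) ∧ (1 ≤ y ∧ y ≤ N+1) ∧ x < y ∧
      ⌊Int.fract ((x:ℝ)*θ) * N⌋ = ⌊Int.fract ((y:ℝ)*θ) * N⌋ := by
    rcases lt_or_gt_of_ne hne with h | h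
    · exact ⟨z1, z2, hz1, hz2, h, heq⟩
    · exact ⟨z2, z1, hz2, hz1, h, heq.symm⟩
  set d : ℤ := y - x with hd
  have hd1 : 1 ≤ d := by omega
  set u : ℝ := Int.fract ((y:ℝ)*θ) - Int.fract ((x:ℝ)*θ) with hu
  have h1 := Int.floor_le (Int.fract ((x:ℝ)*θ) * N)
  have h2 := Int.lt_floor_add_one (Int.fract ((x:ℝ)*θ) * N)
  have h3 := Int.floor_le (Int.fract ((y:ℝ)*θ) * N)
  have h4 := Int.lt_floor_add_one (Int.fract ((y:ℝ)*θ) * N)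
  rw [hfeq] at h1 h2
  have huN1 : u * N < 1 := by rw [hu, sub_mul]; linarith
  have huN2 : -1 < u * N := by rw [hu, sub_mul]; linarith
  have husmall : |u| < 1/N := by
    rw [abs_lt]
    constructor
    · have h5 : (-1:ℝ)/N < u := (div_lt_iff₀ hN0).mpr huN2
      have e : (-1:ℝ)/N = -(1/N) := by ring
      linarith [h5]
    · exact (lt_div_iff₀ hN0).mpr huN1
  have hfract_d : Int.fract ((d:ℝ)*θ) = Int.fract u := by
    have hyf := Int.self_sub_fract ((y:ℝ)*θ)
    have hxf := Int.self_sub_fract ((x:ℝ)*θ)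
    have heqd : (d:ℝ)*θ = u + ((⌊(y:ℝ)*θ⌋ - ⌊(x:ℝ)*θ⌋ : ℤ) : ℝ) := by
      rw [hu, hd]; push_cast; linear_combination hyf - hxf
    rw [heqd, Int.fract_add_intCast]
  have hdne : Int.fract ((d:ℝ)*θ) ≠ 0 := hθ d hd1
  -- helper for the "bootstrap from small positive fract" case
  have boot : ∀ w : ℤ, 1 ≤ w → 0 < Int.fract ((w:ℝ)*θ) → Int.fract ((w:ℝ)*θ) < 1/N →
      ∃ x : ℤ, 2 ≤ x ∧ 1 - δ < Int.fract ((x:ℝ)*θ) := by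
    intro w hw hη0 hηN
    have hwf := Int.self_sub_fract ((w:ℝ)*θ)
    generalize hηdef : Int.fract ((w:ℝ)*θ) = η at hη0 hηN hwf
    have hηhalf : η < 1/2 := lt_trans hηN hinvhalf
    set K : ℤ := ⌈1/η⌉ - 1 with hK
    have hηinv2 : (2:ℝ) < 1/η := by
      rw [lt_div_iff₀ hη0]; linarith
    have hK2 : 2 ≤ K := by
      have : (2:ℤ) < ⌈1/η⌉ := by
        apply Int.lt_ceil.mpr; push_cast; exact hηinv2
      omega
    have hKlt : (K:ℝ) < 1/η := by
      have := Int.ceil_lt_add_one (1/η)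
      rw [hK]; push_cast; linarith
    have hKge : 1/η - 1 ≤ (K:ℝ) := by
      have := Int.le_ceil (1/η)
      rw [hK]; push_cast; linarith
    have hKR : (0:ℝ) ≤ (K:ℝ) := by
      have : ((2:ℤ):ℝ) ≤ (K:ℝ) := Int.cast_le.mpr hK2
      push_cast at this; linarith
    have hKη1 : (K:ℝ) * η < 1 := by
      calc (K:ℝ) * η < (1/η) * η := by apply mul_lt_mul_of_pos_right hKlt hη0
        _ = 1 := by field_simp
    have hKη2 : 1 - η ≤ (K:ℝ) * η := by
      have h9 : (1/η - 1) * η ≤ (K:ℝ) * η := mul_le_mul_of_nonneg_right hKge (le_of_lt hη0)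
      calc 1 - η = (1/η - 1) * η := by field_simp
        _ ≤ (K:ℝ) * η := h9
    refine ⟨K * w, ?_, ?_⟩
    · calc (2:ℤ) = 2 * 1 := by ring
        _ ≤ K * w := by apply mul_le_mul hK2 hw (by norm_num) (by omega)
    · have heq2 : ((K*w : ℤ):ℝ)*θ = (K:ℝ)*η + ((K * ⌊(w:ℝ)*θ⌋ : ℤ):ℝ) := by
        push_cast; linear_combination (K:ℝ) * hwf
      rw [heq2, Int.fract_add_intCast]
      rw [Int.fract_eq_self.mpr ⟨mul_nonneg hKR (le_of_lt hη0), hKη1⟩]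
      have : η < δ := by linarith
      nlinarith
  -- three cases on sign of u
  rcases lt_trichotomy u 0 with hneg | hzero | hpos
  · -- fract u = u + 1, large value, witness d (or double if d = 1)
    have hu1 : Int.fract u = u + 1 := by
      have hshift : Int.fract (u+1) = Int.fract u := by
        rw [show u + 1 = u + ((1:ℤ):ℝ) by push_cast; ring, Int.fract_add_intCast]
      rw [← hshift]
      apply Int.fract_eq_self.mpr
      constructor
      · rw [abs_lt] at husmall; linarith [husmall.1, hinvhalf]
      · linarith
    have hval : 1 - 1/N < Int.fract ((d:ℝ)*θ) := by
      rw [hfract_d, hu1]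
      rw [abs_lt] at husmall
      linarith [husmall.1]
    rcases le_or_gt 2 d with hd2 | hd2
    · exact ⟨d, hd2, by linarith [hinv, hδ, hval]⟩
    · -- d = 1
      have hdeq : d = 1 := by omega
      have hval1 : 1 - 1/N < Int.fract θ := by
        have h6 := hval; rw [hdeq] at h6; push_cast at h6; rwa [one_mul] at h6
      have hv1 : Int.fract θ < 1 := Int.fract_lt_one _
      have hθf := Int.self_sub_fract θ
      refine ⟨2, le_refl _, ?_⟩
      have h2d : ((2:ℤ):ℝ) * θ = (2*Int.fract θ - 1) + ((2 * ⌊θ⌋ + 1 : ℤ):ℝ) := by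
        push_cast; linarith [hθf]
      rw [h2d, Int.fract_add_intCast]
      rw [Int.fract_eq_self.mpr ⟨by linarith [hinvhalf], by linarith⟩]
      linarith [hinv]
  · exfalso; apply hdne; rw [hfract_d, hzero, Int.fract_zero]
  · -- fract u = u, small positive, bootstrap
    have hu1 : Int.fract u = u := by
      apply Int.fract_eq_self.mpr
      rw [abs_lt] at husmall
      constructor
      · linarith
      · linarith [hinvhalf, husmall.2]
    apply boot d hd1
    · rw [hfract_d, hu1]; exact hpos
    · rw [hfract_d, hu1]; rw [abs_lt] at husmall; exact husmall.2

private lemma usp_mem_iff (a : ℝ) (ha : 1 ≤ a) (k : ℤ) (hk : 1 ≤ k) :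
    (∃ n : ℕ, 0 < n ∧ ⌊(n : ℝ) * a⌋ = k) ↔ ⌈((k:ℝ)+1)/a⌉ = ⌈(k:ℝ)/a⌉ + 1 := by
  have ha0 : 0 < a := lt_of_lt_of_le one_pos ha
  have hub : ⌈((k:ℝ)+1)/a⌉ ≤ ⌈(k:ℝ)/a⌉ + 1 := by
    apply Int.ceil_le.mpr
    have h1 : ((k:ℝ)+1)/a = (k:ℝ)/a + 1/a := by ring
    have h2 : (1:ℝ)/a ≤ 1 := by rw [div_le_one ha0]; exact ha
    have h3 := Int.le_ceil ((k:ℝ)/a)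
    push_cast
    rw [h1]; linarith
  constructor
  · rintro ⟨n, hn, hfl⟩
    rw [Int.floor_eq_iff] at hfl
    obtain ⟨hlo, hhi⟩ := hfl
    have hn1 : (k:ℝ)/a ≤ (n:ℝ) := by rw [div_le_iff₀ ha0]; linarith
    have hn2 : ((n:ℕ):ℤ) < ⌈((k:ℝ)+1)/a⌉ := by
      apply Int.lt_ceil.mpr
      rw [lt_div_iff₀ ha0]; push_cast; linarith
    have hn3 : ⌈(k:ℝ)/a⌉ ≤ ((n:ℕ):ℤ) := by
      apply Int.ceil_le.mpr; push_cast; exact hn1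
    omega
  · intro h
    have hkpos : (0:ℝ) < (k:ℝ)/a := by
      apply div_pos _ ha0
      exact_mod_cast lt_of_lt_of_le one_pos (by exact_mod_cast hk : (1:ℝ) ≤ (k:ℝ))
    set n : ℤ := ⌈(k:ℝ)/a⌉ with hn
    have hnpos : 0 < n := Int.ceil_pos.mpr hkpos
    refine ⟨n.toNat, by omega, ?_⟩
    have hcast : ((n.toNat : ℕ) : ℝ) = (n:ℝ) := by
      rw [← Int.cast_natCast, Int.toNat_of_nonneg (by omega)]
    rw [hcast]
    rw [Int.floor_eq_iff]
    constructor
    · have h1 : (k:ℝ)/a ≤ (n:ℝ) := Int.le_ceil _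
      calc (k:ℝ) = ((k:ℝ)/a) * a := by field_simp
        _ ≤ (n:ℝ) * a := mul_le_mul_of_nonneg_right h1 (le_of_lt ha0)
    · have h2 : (n:ℝ) < ((k:ℝ)+1)/a := by
        have h3 := Int.ceil_lt_add_one (((k:ℝ)+1)/a)
        have h4 : ((⌈((k:ℝ)+1)/a⌉ : ℤ) : ℝ) = (n:ℝ) + 1 := by rw [h]; push_cast; ring
        linarith
      have := mul_lt_mul_of_pos_right h2 ha0
      rw [div_mul_cancel₀] at this
      · push_cast; linarith
      · exact ne_of_gt ha0

private lemma usp_mem_of_fract (a : ℝ) (ha : 1 < a) (x : ℤ) (hx : 2 ≤ x)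
    (hlt : Int.fract ((x:ℝ)/a) < 1/a) (hne : Int.fract ((x:ℝ)/a) ≠ 0) :
    ∃ n : ℕ, 0 < n ∧ ⌊(n : ℝ) * a⌋ = x - 1 := by
  have ha0 : 0 < a := lt_trans one_pos ha
  set n : ℤ := ⌊(x:ℝ)/a⌋ with hn
  have hself := Int.self_sub_fract ((x:ℝ)/a)
  have hfr0 : 0 < Int.fract ((x:ℝ)/a) :=
    lt_of_le_of_ne (Int.fract_nonneg _) (Ne.symm hne)
  have hnlo : ((x:ℝ)-1)/a < (n:ℝ) := by
    rw [div_lt_iff₀ ha0]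
    have h1 : (n:ℝ) = (x:ℝ)/a - Int.fract ((x:ℝ)/a) := by linarith
    have h2 : ((x:ℝ)-1)/a = (x:ℝ)/a - 1/a := by ring
    nlinarith [hlt, div_mul_cancel₀ ((x:ℝ)-1) (ne_of_gt ha0), div_mul_cancel₀ (x:ℝ) (ne_of_gt ha0)]
  have hnhi : (n:ℝ) < (x:ℝ)/a := by
    have h1 : (n:ℝ) = (x:ℝ)/a - Int.fract ((x:ℝ)/a) := by linarith
    linarith
  have hnpos : 0 < n := by
    have : (0:ℝ) < ((x:ℝ)-1)/a := by
      apply div_pos _ ha0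
      have : (2:ℝ) ≤ (x:ℝ) := by exact_mod_cast hx
      linarith
    have : (0:ℝ) < (n:ℝ) := lt_trans this hnlo
    exact_mod_cast this
  refine ⟨n.toNat, by omega, ?_⟩
  have hcast : ((n.toNat : ℕ) : ℝ) = (n:ℝ) := by
    rw [← Int.cast_natCast, Int.toNat_of_nonneg (by omega)]
  rw [hcast, Int.floor_eq_iff]
  constructor
  · push_cast
    have := mul_lt_mul_of_pos_right hnlo ha0
    rw [div_mul_cancel₀ _ (ne_of_gt ha0)] at this
    linarith
  · push_cast
    have := mul_lt_mul_of_pos_right hnhi ha0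
    rw [div_mul_cancel₀ _ (ne_of_gt ha0)] at this
    linarith

theorem uspensky (m : ℕ) (hm : 0 < m) (a : Fin m → ℝ) (ha : ∀ i, 0 < a i)
    (hdisj : ∀ i j : Fin m, i ≠ j →
      Disjoint {k : ℤ | ∃ n : ℕ, 0 < n ∧ ⌊(n : ℝ) * a i⌋ = k}
               {k : ℤ | ∃ n : ℕ, 0 < n ∧ ⌊(n : ℝ) * a j⌋ = k})
    (hcover : (⋃ i : Fin m, {k : ℤ | ∃ n : ℕ, 0 < n ∧ ⌊(n : ℝ) * a i⌋ = k})
        = {k : ℤ | 0 < k}) :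
    (m = 1 ∧ ∀ i, a i = 1) ∨
      (m = 2 ∧ (∀ i, Irrational (a i)) ∧ ∑ i, 1 / a i = 1) := by
  -- every a i is at least 1
  have ha1 : ∀ i, 1 ≤ a i := by
    intro i
    have hmem : ⌊a i⌋ ∈ ⋃ i : Fin m, {k : ℤ | ∃ n : ℕ, 0 < n ∧ ⌊(n : ℝ) * a i⌋ = k} := by
      apply Set.mem_iUnion.mpr
      exact ⟨i, ⟨1, one_pos, by norm_num⟩⟩
    rw [hcover] at hmem
    have h0 : 0 < ⌊a i⌋ := hmem
    have h1 : (1:ℤ) ≤ ⌊a i⌋ := by omega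
    exact_mod_cast Int.le_floor.mp h1
  -- exactly one set contains each positive integer
  have hexuniq : ∀ k : ℤ, 1 ≤ k → ∃ i : Fin m,
      (∃ n : ℕ, 0 < n ∧ ⌊(n : ℝ) * a i⌋ = k) ∧
      ∀ j, j ≠ i → ¬(∃ n : ℕ, 0 < n ∧ ⌊(n : ℝ) * a j⌋ = k) := by
    intro k hk
    have hmem : k ∈ ⋃ i : Fin m, {k : ℤ | ∃ n : ℕ, 0 < n ∧ ⌊(n : ℝ) * a i⌋ = k} := by
      rw [hcover]; simp only [Set.mem_setOf_eq]; omega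
    obtain ⟨i, hi⟩ := Set.mem_iUnion.mp hmem
    refine ⟨i, hi, fun j hj hcon => ?_⟩
    exact Set.disjoint_left.mp (hdisj j i hj) hcon hi
  -- the ceil-difference sum identity
  have hsumdiff : ∀ k : ℤ, 1 ≤ k →
      ∑ i, (⌈((k:ℝ)+1)/a i⌉ - ⌈(k:ℝ)/a i⌉) = 1 := by
    intro k hk
    obtain ⟨i₀, hi₀, huniq⟩ := hexuniq k hk
    rw [Finset.sum_eq_single_of_mem i₀ (Finset.mem_univ _)]
    · have := (usp_mem_iff (a i₀) (ha1 i₀) k hk).mp hi₀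
      omega
    · intro j _ hj
      have hnot := huniq j hj
      have hiff := usp_mem_iff (a j) (ha1 j) k hk
      have hub : ⌈((k:ℝ)+1)/a j⌉ ≤ ⌈(k:ℝ)/a j⌉ + 1 := by
        apply Int.ceil_le.mpr
        have h2 : (1:ℝ)/a j ≤ 1 := by
          rw [div_le_one (lt_of_lt_of_le one_pos (ha1 j))]; exact ha1 j
        have h3 := Int.le_ceil ((k:ℝ)/a j)
        push_cast
        have : ((k:ℝ)+1)/a j = (k:ℝ)/a j + 1/a j := by ring
        rw [this]; linarith
      have hlb : ⌈(k:ℝ)/a j⌉ ≤ ⌈((k:ℝ)+1)/a j⌉ := by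
        apply Int.ceil_le_ceil
        have h0 : (0:ℝ) < a j := lt_of_lt_of_le one_pos (ha1 j)
        have hdiff : ((k:ℝ)+1)/a j - (k:ℝ)/a j = 1/a j := by ring
        linarith [one_div_pos.mpr h0]
      have : ⌈((k:ℝ)+1)/a j⌉ ≠ ⌈(k:ℝ)/a j⌉ + 1 := fun h => hnot (hiff.mpr h)
      omega
  -- telescoping
  have htel : ∀ x : ℤ, 1 ≤ x → ∑ i, ⌈(x:ℝ)/a i⌉ = x + (m:ℤ) - 1 := by
    have base : ∑ i, ⌈(((1:ℤ)):ℝ)/a i⌉ = (1:ℤ) + (m:ℤ) - 1 := by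
      have hone : ∀ i : Fin m, ⌈((1:ℤ):ℝ)/a i⌉ = 1 := by
        intro i
        apply Int.ceil_eq_iff.mpr
        constructor
        · push_cast
          have : (0:ℝ) < 1 / a i := div_pos one_pos (ha i)
          linarith
        · push_cast
          rw [div_le_one (ha i)]; exact ha1 i
      rw [Finset.sum_congr rfl (fun i _ => hone i)]
      simp
    have step : ∀ n : ℤ, 1 ≤ n → (∑ i, ⌈(n:ℝ)/a i⌉ = n + (m:ℤ) - 1) →
        ∑ i, ⌈((n+1:ℤ):ℝ)/a i⌉ = (n+1) + (m:ℤ) - 1 := by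
      intro n hn ih
      have hc : ∀ i : Fin m, ⌈((n+1:ℤ):ℝ)/a i⌉ = ⌈((n:ℝ)+1)/a i⌉ := by
        intro i; norm_num
      rw [Finset.sum_congr rfl (fun i _ => hc i)]
      have hd := hsumdiff n hn
      rw [Finset.sum_sub_distrib] at hd
      omega
    exact Int.le_induction (motive := fun x _ => ∑ i, ⌈(x:ℝ)/a i⌉ = x + (m:ℤ) - 1) base step
  -- the density sum identity: ∑ 1/a i = 1
  set s : ℝ := ∑ i, 1 / a i with hsdef
  have hsumle : ∀ x : ℤ, 1 ≤ x → (x:ℝ) * s ≤ (x:ℝ) + m - 1 := by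
    intro x hx
    have h1 : ((∑ i, ⌈(x:ℝ)/a i⌉ : ℤ) : ℝ) = (x:ℝ) + m - 1 := by
      rw [htel x hx]; push_cast; ring
    push_cast at h1
    rw [← h1, hsdef, Finset.mul_sum]
    apply Finset.sum_le_sum
    intro i _
    rw [mul_one_div]
    exact Int.le_ceil _
  have hsumgt : ∀ x : ℤ, 1 ≤ x → (x:ℝ) + m - 1 < (x:ℝ) * s + m := by
    intro x hx
    have h1 : ((∑ i, ⌈(x:ℝ)/a i⌉ : ℤ) : ℝ) = (x:ℝ) + m - 1 := by
      rw [htel x hx]; push_cast; ring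
    push_cast at h1
    rw [← h1, hsdef, Finset.mul_sum]
    have : ∑ i, ((⌈(x:ℝ)/a i⌉ : ℝ)) < ∑ i : Fin m, ((x:ℝ) * (1/a i) + 1) := by
      apply Finset.sum_lt_sum_of_nonempty
      · exact Finset.univ_nonempty_iff.mpr (Fin.pos_iff_nonempty.mp hm)
      · intro i _
        rw [mul_one_div]
        exact Int.ceil_lt_add_one _
    rw [Finset.sum_add_distrib] at this
    simp only [Finset.sum_const, Finset.card_univ, Fintype.card_fin, nsmul_eq_mul, mul_one] at this
    linarith
  have hs1 : s = 1 := by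
    by_contra hne
    rcases lt_or_gt_of_ne hne with hlt | hgt
    · obtain ⟨n, hn⟩ := exists_nat_gt (1 / (1 - s))
      have h1s : (0:ℝ) < 1 - s := by linarith
      have hx1 : (1:ℤ) ≤ (n:ℤ) + 1 := by omega
      have := hsumgt ((n:ℤ)+1) hx1
      push_cast at this
      have hgtn : 1/(1-s) < (n:ℝ) + 1 := by linarith
      rw [div_lt_iff₀ h1s] at hgtn
      nlinarith
    · obtain ⟨n, hn⟩ := exists_nat_gt ((m:ℝ) / (s - 1))
      have h1s : (0:ℝ) < s - 1 := by linarith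
      have hx1 : (1:ℤ) ≤ (n:ℤ) + 1 := by omega
      have := hsumle ((n:ℤ)+1) hx1
      push_cast at this
      have hgtn : (m:ℝ)/(s-1) < (n:ℝ) + 1 := by linarith
      rw [div_lt_iff₀ h1s] at hgtn
      nlinarith
  -- now case on m
  rcases Nat.lt_or_ge m 2 with hm2 | hm2
  · -- m = 1
    have hm1 : m = 1 := by omega
    subst hm1
    left
    refine ⟨rfl, fun i => ?_⟩
    have hi0 : i = 0 := Subsingleton.elim i 0
    subst hi0
    have : s = 1 / a 0 := by rw [hsdef, Fin.sum_univ_one]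
    rw [this] at hs1
    have ha0 : 0 < a 0 := ha 0
    field_simp at hs1
    linarith [hs1]
  -- m ≥ 2 : all a i are irrational
  have hnint : ∀ i, ∀ x : ℤ, 1 ≤ x → (x:ℝ)/a i < ⌈(x:ℝ)/a i⌉ := by
    intro i x hx
    have h1 : ((∑ j, ⌈(x:ℝ)/a j⌉ : ℤ) : ℝ) = (x:ℝ) + m - 1 := by
      rw [htel x hx]; push_cast; ring
    push_cast at h1
    have h2 : ∑ j, (x:ℝ)/a j = (x:ℝ) := by
      have : ∑ j, (x:ℝ)/a j = (x:ℝ) * s := by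
        rw [hsdef, Finset.mul_sum]
        apply Finset.sum_congr rfl
        intro j _; rw [mul_one_div]
      rw [this, hs1, mul_one]
    -- sum of (ceil - val) = m - 1
    have h3 : ∑ j, ((⌈(x:ℝ)/a j⌉ : ℝ) - (x:ℝ)/a j) = (m:ℝ) - 1 := by
      rw [Finset.sum_sub_distrib, h1, h2]; ring
    have h4 : ∑ j ∈ Finset.univ.erase i, ((⌈(x:ℝ)/a j⌉ : ℝ) - (x:ℝ)/a j) < (m:ℝ) - 1 := by
      have hne : (Finset.univ.erase i).Nonempty := by
        rw [← Finset.card_pos, Finset.card_erase_of_mem (Finset.mem_univ _)]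
        simp only [Finset.card_univ, Fintype.card_fin]
        omega
      calc ∑ j ∈ Finset.univ.erase i, ((⌈(x:ℝ)/a j⌉ : ℝ) - (x:ℝ)/a j)
          < ∑ j ∈ Finset.univ.erase i, (1:ℝ) := by
            apply Finset.sum_lt_sum_of_nonempty hne
            intro j _
            have := Int.ceil_lt_add_one ((x:ℝ)/a j)
            linarith
        _ = (m:ℝ) - 1 := by
            rw [Finset.sum_const, Finset.card_erase_of_mem (Finset.mem_univ _)]
            simp only [Finset.card_univ, Fintype.card_fin, nsmul_eq_mul, mul_one]
            have : (1:ℕ) ≤ m := by omega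
            push_cast [Nat.cast_sub this]
            ring
    have h5 : ∑ j, ((⌈(x:ℝ)/a j⌉ : ℝ) - (x:ℝ)/a j)
        = ((⌈(x:ℝ)/a i⌉ : ℝ) - (x:ℝ)/a i)
          + ∑ j ∈ Finset.univ.erase i, ((⌈(x:ℝ)/a j⌉ : ℝ) - (x:ℝ)/a j) := by
      rw [← Finset.sum_erase_add _ _ (Finset.mem_univ i)]; ring
    have h6 : 0 < (⌈(x:ℝ)/a i⌉ : ℝ) - (x:ℝ)/a i := by
      rw [h5] at h3; linarith
    linarith
  have hfrne : ∀ i, ∀ x : ℤ, 1 ≤ x → Int.fract ((x:ℝ)/a i) ≠ 0 := by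
    intro i x hx h0
    have h1 : (x:ℝ)/a i = ((⌊(x:ℝ)/a i⌋ : ℤ) : ℝ) := by
      have := Int.self_sub_fract ((x:ℝ)/a i)
      rw [h0] at this; linarith
    have h2 := hnint i x hx
    rw [h1, Int.ceil_intCast] at h2
    exact lt_irrefl _ h2
  have hirr : ∀ i, Irrational (a i) := by
    intro i
    rw [Irrational]
    rintro ⟨q, hq⟩
    have hq1 : (1:ℝ) ≤ (q:ℝ) := by rw [hq]; exact ha1 i
    have hq1' : 1 ≤ q := by exact_mod_cast hq1
    have hqpos : 0 < q := by linarith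
    have hnum : 1 ≤ q.num := by
      have := Rat.num_pos.mpr (lt_of_lt_of_le one_pos hq1')
      omega
    have hval : ((q.num : ℤ):ℝ) / a i = ((q.den : ℤ) : ℝ) := by
      rw [← hq, Rat.cast_def]
      have hd0 : ((q.den:ℝ)) ≠ 0 := by
        have := q.den_pos; positivity
      have hn0 : ((q.num:ℝ)) ≠ 0 := by
        have : (1:ℝ) ≤ (q.num:ℝ) := by exact_mod_cast hnum
        linarith
      field_simp
      norm_cast
    have := hnint i q.num hnum
    rw [hval, Int.ceil_intCast] at this
    exact lt_irrefl _ this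
  -- fract sum identity
  have hsumfr : ∀ x : ℤ, 1 ≤ x → ∑ i, Int.fract ((x:ℝ)/a i) = 1 := by
    intro x hx
    have hfl : ∀ i : Fin m, ⌊(x:ℝ)/a i⌋ = ⌈(x:ℝ)/a i⌉ - 1 := by
      intro i
      have h1 := Int.ceil_le_floor_add_one ((x:ℝ)/a i)
      have h2 : ⌊(x:ℝ)/a i⌋ < ⌈(x:ℝ)/a i⌉ := by
        have h3 := Int.floor_le ((x:ℝ)/a i)
        have h4 := hnint i x hx
        exact_mod_cast lt_of_le_of_lt h3 h4
      omega
    have h2 : ∑ i, (x:ℝ)/a i = (x:ℝ) := by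
      have : ∑ i, (x:ℝ)/a i = (x:ℝ) * s := by
        rw [hsdef, Finset.mul_sum]
        apply Finset.sum_congr rfl
        intro j _; rw [mul_one_div]
      rw [this, hs1, mul_one]
    have h3 : ((∑ i, ⌊(x:ℝ)/a i⌋ : ℤ) : ℝ) = (x:ℝ) - 1 := by
      have : ∑ i, ⌊(x:ℝ)/a i⌋ = ∑ i, (⌈(x:ℝ)/a i⌉ - 1) := Finset.sum_congr rfl (fun i _ => hfl i)
      rw [this, Finset.sum_sub_distrib, htel x hx]
      push_cast
      simp only [Finset.sum_const, Finset.card_univ, Fintype.card_fin, nsmul_eq_mul, mul_one]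
      ring
    push_cast at h3
    have h4 : ∑ i, Int.fract ((x:ℝ)/a i) = ∑ i, ((x:ℝ)/a i - (⌊(x:ℝ)/a i⌋ : ℝ)) := by
      apply Finset.sum_congr rfl
      intro i _
      rw [Int.fract]
    rw [h4, Finset.sum_sub_distrib, h2, h3]
    ring
  -- m ≥ 3 is impossible
  rcases Nat.lt_or_ge m 3 with hm3 | hm3
  · -- m = 2
    have hm2' : m = 2 := by omega
    subst hm2'
    right
    exact ⟨rfl, hirr, hs1⟩
  · -- m ≥ 3 : contradiction
    exfalso
    have ha1' : ∀ i, 1 < a i := fun i =>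
      lt_of_le_of_ne (ha1 i) (Ne.symm ((hirr i).ne_one))
    set i0 : Fin m := ⟨0, by omega⟩ with hi0def
    set i1 : Fin m := ⟨1, by omega⟩ with hi1def
    set i2 : Fin m := ⟨2, by omega⟩ with hi2def
    have h01 : i0 ≠ i1 := Fin.ne_of_val_ne (by norm_num)
    have h02 : i0 ≠ i2 := Fin.ne_of_val_ne (by norm_num)
    have h12 : i1 ≠ i2 := Fin.ne_of_val_ne (by norm_num)
    set δ : ℝ := min (1 / a i1) (1 / a i2) with hδdef
    have hδpos : 0 < δ := by
      apply lt_min <;> [skip; skip] <;>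
      · apply div_pos one_pos (lt_trans one_pos (ha1' _))
    have hθ : ∀ x : ℤ, 1 ≤ x → Int.fract ((x:ℝ) * (1 / a i0)) ≠ 0 := by
      intro x hx
      rw [mul_one_div]
      exact hfrne i0 x hx
    obtain ⟨x, hx2, hbig⟩ := usp_dense (1 / a i0) hθ δ hδpos
    rw [mul_one_div] at hbig
    have hx1 : (1:ℤ) ≤ x := by omega
    have hsum := hsumfr x hx1
    -- sum over the three indices is at most the total
    have hsub : ({i0, i1, i2} : Finset (Fin m)) ⊆ Finset.univ := Finset.subset_univ _
    have h3sum : Int.fract ((x:ℝ)/a i0) + Int.fract ((x:ℝ)/a i1) + Int.fract ((x:ℝ)/a i2)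
        ≤ ∑ i, Int.fract ((x:ℝ)/a i) := by
      have := Finset.sum_le_sum_of_subset_of_nonneg hsub
        (fun i _ _ => Int.fract_nonneg ((x:ℝ)/a i))
      rw [Finset.sum_insert (by simp [h01, h02]), Finset.sum_insert (by simp [h12]),
        Finset.sum_singleton] at this
      linarith
    have hk1 : Int.fract ((x:ℝ)/a i1) < 1 / a i1 := by
      have := min_le_left (1 / a i1) (1 / a i2)
      have hnn := Int.fract_nonneg ((x:ℝ)/a i2)
      rw [hsum] at h3sum
      calc Int.fract ((x:ℝ)/a i1) ≤ 1 - Int.fract ((x:ℝ)/a i0) - Int.fract ((x:ℝ)/a i2) := by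
            linarith
        _ < δ := by linarith
        _ ≤ 1 / a i1 := min_le_left _ _
    have hk2 : Int.fract ((x:ℝ)/a i2) < 1 / a i2 := by
      have hnn := Int.fract_nonneg ((x:ℝ)/a i1)
      rw [hsum] at h3sum
      calc Int.fract ((x:ℝ)/a i2) ≤ 1 - Int.fract ((x:ℝ)/a i0) - Int.fract ((x:ℝ)/a i1) := by
            linarith
        _ < δ := by linarith
        _ ≤ 1 / a i2 := min_le_right _ _
    have hmem1 := usp_mem_of_fract (a i1) (ha1' i1) x hx2 hk1 (hfrne i1 x hx1)
    have hmem2 := usp_mem_of_fract (a i2) (ha1' i2) x hx2 hk2 (hfrne i2 x hx1)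
    exact Set.disjoint_left.mp (hdisj i1 i2 h12) hmem1 hmem2
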